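/- Let z, f, g, h be words with f and g nonempty such that zf = gzh, and let a be a letter. Let az' be the longest unbordered prefix of az (so z' is a prefix of z). If az does not occur as a factor of zf, then the word agz' is unbordered. -/

import Mathlib

open List

variable {A : Type*}

/-- `u` is a border of `w`: `u` is nonempty, a prefix of `w`, and a suffix of `w`
(in particular every nonempty word is a border of itself). -/
def IsBorder (u w : List A) : Prop :=
  u ≠ [] ∧ u <+: w ∧ u <:+ w

/-- `w` is bordered if it has a border strictly shorter than itself. -/
def Bordered (w : List A) : Prop :=
  ∃ u, IsBorder u w ∧ u.length < w.length

/-- `w` is unbordered if it is not bordered. -/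
def Unbordered (w : List A) : Prop := ¬ Bordered w

/-- The (minimum) period `∂(w)` of a word `w`: the least positive `p ≤ |w|` such that
the letter at position `i` equals the letter at position `i + p` whenever both exist. -/
noncomputable def period (w : List A) : ℕ :=
  sInf {p | 0 < p ∧ p ≤ w.length ∧ ∀ i, i + p < w.length → w[i]? = w[i + p]?}

/-- `μ(w)`: the maximum length of an unbordered factor of `w`. -/
noncomputable def mu (w : List A) : ℕ :=
  sSup {n | ∃ v : List A, v.length = n ∧ v <:+: w ∧ Unbordered v}

/-- `a :: z'` is the longest unbordered prefix of `a :: z`: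
`z'` is a prefix of `z`, `a :: z'` is unbordered, and any prefix `z''` of `z`
with `a :: z''` unbordered satisfies `|z''| ≤ |z'|`. -/
def LongestUnborderedPrefix (a : A) (z' z : List A) : Prop :=
  z' <+: z ∧ Unbordered (a :: z') ∧
    ∀ z'' : List A, z'' <+: z → Unbordered (a :: z'') → z''.length ≤ z'.length

/-- A bordered word has a shortest border, which is unbordered. -/
lemma shortest_border {w : List A} (hw : Bordered w) :
    ∃ u, IsBorder u w ∧ u.length < w.length ∧ Unbordered u := by
  classical
  have hex : ∃ n, ∃ u : List A, IsBorder u w ∧ u.length < w.length ∧ u.length = n := by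
    obtain ⟨u, h1, h2⟩ := hw; exact ⟨u.length, u, h1, h2, rfl⟩
  obtain ⟨u, h1, h2, h3⟩ := Nat.find_spec hex
  refine ⟨u, h1, h2, ?_⟩
  rintro ⟨v, hv, hvlen⟩
  have hvb : IsBorder v w := ⟨hv.1, hv.2.1.trans h1.2.1, hv.2.2.trans h1.2.2⟩
  exact Nat.find_min hex (show v.length < Nat.find hex by omega)
    ⟨v, hvb, by omega, rfl⟩

/-- A suffix of `a :: l` of length at most `|l|` is a suffix of `l`. -/
lemma suffix_of_suffix_cons {a : A} {u l : List A} (hsuf : u <:+ a :: l)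
    (hlen : u.length ≤ l.length) : u <:+ l := by
  obtain ⟨x, hx⟩ := hsuf
  cases x with
  | nil =>
    simp only [nil_append] at hx
    subst hx
    simp at hlen
  | cons b x' =>
    rw [cons_append] at hx
    injection hx with _ h2
    exact ⟨x', h2⟩

lemma suffix_of_suffix_of_length_le {u v w : List A} (hu : u <:+ w) (hv : v <:+ w)
    (hlen : u.length ≤ v.length) : u <:+ v := by
  rw [← reverse_prefix] at hu hv ⊢
  exact prefix_of_prefix_length_le hu hv (by simpa)

/-- Lemma: if `z ++ f = g ++ z ++ h` with `f, g` nonempty, `a :: z'` is the longest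
unbordered prefix of `a :: z`, and `a :: z` does not occur as a factor of `z ++ f`,
then `a :: (g ++ z')` is unbordered. -/
theorem unbordered_of_not_infix (z f g h : List A) (a : A)
    (hf : f ≠ []) (hg : g ≠ []) (heq : z ++ f = g ++ z ++ h)
    (z' : List A) (hz' : LongestUnborderedPrefix a z' z)
    (hocc : ¬ (a :: z) <:+: (z ++ f)) :
    Unbordered (a :: (g ++ z')) := by
  obtain ⟨hz'z, hazunb, hmax⟩ := hz'
  intro hb
  obtain ⟨u, ⟨hne, hupre, husuf⟩, hulen, huunb⟩ := shortest_border hb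
  have hm : 0 < g.length := List.length_pos_iff.mpr hg
  have hgz_pre : g ++ z <+: z ++ f := ⟨h, by rw [heq, append_assoc]⟩
  have hzgz : z <+: g ++ z :=
    prefix_of_prefix_length_le (prefix_append z f) hgz_pre (by simp)
  obtain ⟨t, ht⟩ := hz'z
  have hgz'_gz : g ++ z' <+: g ++ z := ⟨t, by rw [← ht, append_assoc]⟩
  have hkz : z'.length ≤ z.length := by
    have := congrArg length ht; simp at this; omega
  cases u with
  | nil => exact hne rfl
  | cons b v =>
    rw [cons_prefix_cons] at hupre
    obtain ⟨rfl, hvpre⟩ := hupre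
    have hvgz : v <+: g ++ z := hvpre.trans hgz'_gz
    have hvlen : v.length ≤ g.length + z'.length := by
      have := hvpre.length_le; simpa using this
    simp only [length_cons, length_append] at hulen
    rcases lt_trichotomy v.length z'.length with hc | hc | hc
    · -- case (i): a :: v is a border of a :: z'
      have hvz : v <+: z := prefix_of_prefix_length_le hvgz hzgz (by omega)
      have hvz' : v <+: z' := prefix_of_prefix_length_le hvz ⟨t, ht⟩ (by omega)
      have hz'suf : z' <:+ b :: (g ++ z') :=
        (suffix_append g z').trans (suffix_cons b (g ++ z'))
      have husufz' : (b :: v) <:+ z' :=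
        suffix_of_suffix_of_length_le husuf hz'suf (by simp; omega)
      exact hazunb ⟨b :: v, ⟨cons_ne_nil _ _, cons_prefix_cons.mpr ⟨rfl, hvz'⟩,
        husufz'.trans (suffix_cons b z')⟩, by simp; omega⟩
    · -- case (ii): g ends with a, so a :: z is a factor of z ++ f
      have husuf2 : (b :: v) <:+ g ++ z' :=
        suffix_of_suffix_cons husuf (by simp; omega)
      obtain ⟨x, hx⟩ := husuf2
      have hx2 : g ++ z' = (x ++ [b]) ++ v := by rw [← hx]; simp
      have hxlen : x.length + 1 + v.length = g.length + z'.length := by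
        have := congrArg length hx2; simp at this; omega
      obtain ⟨hg2, -⟩ := append_inj hx2 (by simp; omega)
      exact hocc ⟨x, h, by rw [heq, hg2]; simp⟩
    · rcases le_or_gt v.length z.length with hvn | hvn
      · -- case (iii): contradiction with maximality of z'
        have hvz : v <+: z := prefix_of_prefix_length_le hvgz hzgz hvn
        have := hmax v hvz huunb
        omega
      · -- case (iv): a :: z is a prefix of u, a factor of z ++ f
        have hzv : z <+: v := prefix_of_prefix_length_le hzgz hvgz (le_of_lt hvn)
        obtain ⟨v₂, rfl⟩ := hzv
        have husuf2 : (b :: (z ++ v₂)) <:+ g ++ z' :=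
          suffix_of_suffix_cons husuf (by simp at hulen ⊢; omega)
        have hmid : (b :: (z ++ v₂)) <:+: z ++ f :=
          husuf2.isInfix.trans (hgz'_gz.trans hgz_pre).isInfix
        have hpre : (b :: z) <+: (b :: (z ++ v₂)) := ⟨v₂, by simp⟩
        exact hocc (hpre.isInfix.trans hmid)
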